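/- arXiv:2510.26397 — 7 statements merged into one kernel-verified Lean document; each statement's English description precedes it below -/
import Mathlib

section
/- Let γ : ℝ≥0 → ℝ≥0 be a continuously differentiable class-K∞ function whose derivative γ' is also class-K∞. Then the Legendre–Fenchel transform ℓγ is itself a class-K∞ function. -/
open Filter Set intervalIntegral

/-- A class-K∞ function, viewed as a function `ℝ → ℝ` restricted to `[0,∞)`. -/
def ClassKInf (γ : ℝ → ℝ) : Prop :=
  ContinuousOn γ (Set.Ici 0) ∧ StrictMonoOn γ (Set.Ici 0) ∧ γ 0 = 0 ∧
    (∀ s, 0 ≤ s → 0 ≤ γ s) ∧ Filter.Tendsto γ Filter.atTop Filter.atTop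

/-- The Legendre–Fenchel transform `ℓγ(r) = ∫₀^r (γ')⁻¹(s) ds` of a continuously
differentiable class-K∞ function with class-K∞ derivative is itself class-K∞. -/
theorem legendre_fenchel_classKInf
    (γ γ' δ : ℝ → ℝ)
    (hγ : ClassKInf γ)
    (hderiv : ∀ r, 0 ≤ r → HasDerivAt γ (γ' r) r)
    (hγ' : ClassKInf γ')
    (hδ_nonneg : ∀ s, 0 ≤ s → 0 ≤ δ s)
    (hδ_left : ∀ s, 0 ≤ s → γ' (δ s) = s)
    (hδ_right : ∀ s, 0 ≤ s → δ (γ' s) = s) :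
    ClassKInf (fun r => ∫ s in (0:ℝ)..r, δ s) := by
  obtain ⟨hc, hsm, h0, hnn, htop⟩ := hγ'
  -- δ is monotone on [0, ∞)
  have hmono : MonotoneOn δ (Set.Ici 0) := by
    intro a ha b hb hab
    by_contra h
    push_neg at h
    have := hsm (hδ_nonneg b hb) (hδ_nonneg a ha) h
    rw [hδ_left a ha, hδ_left b hb] at this
    exact absurd hab (not_le.mpr this)
  -- δ is positive on (0, ∞)
  have hpos : ∀ s : ℝ, 0 < s → 0 < δ s := by
    intro s hs
    rcases lt_or_eq_of_le (hδ_nonneg s hs.le) with h | h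
    · exact h
    · exfalso
      have := hδ_left s hs.le
      rw [← h, h0] at this
      exact hs.ne this
  -- δ is interval integrable on subintervals of [0, ∞)
  have hint : ∀ a b : ℝ, 0 ≤ a → 0 ≤ b → IntervalIntegrable δ MeasureTheory.volume a b := by
    intro a b ha hb
    exact (hmono.mono (fun x hx => le_trans (le_inf ha hb) hx.1)).intervalIntegrable
  refine ⟨?_, ?_, ?_, ?_, ?_⟩
  · -- Continuity
    intro x hx
    have hx0 : (0:ℝ) ≤ x := hx
    have h := intervalIntegral.continuousWithinAt_primitive (μ := MeasureTheory.volume)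
      (f := δ) (a := 0) (b₀ := x) (b₁ := 0) (b₂ := x + 1) (by simp)
      (by rw [min_self, max_eq_right (by linarith : (0:ℝ) ≤ x + 1)]
          exact hint 0 (x + 1) le_rfl (by linarith))
    apply h.mono_of_mem_nhdsWithin
    have : Set.Icc (0:ℝ) (x+1) = Set.Ici 0 ∩ Set.Iic (x+1) := (Set.Ici_inter_Iic).symm
    rw [this]
    exact Filter.inter_mem self_mem_nhdsWithin
      (mem_nhdsWithin_of_mem_nhds (Iic_mem_nhds (by linarith)))
  · -- Strict monotonicity
    intro a ha b hb hab
    have ha0 : (0:ℝ) ≤ a := ha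
    have hb0 : (0:ℝ) ≤ b := hb
    simp only
    have hsplit : (∫ s in (0:ℝ)..a, δ s) + (∫ s in a..b, δ s) = ∫ s in (0:ℝ)..b, δ s :=
      intervalIntegral.integral_add_adjacent_intervals (hint 0 a le_rfl ha0) (hint a b ha0 hb0)
    set m : ℝ := (a + b) / 2 with hm_def
    have hm : 0 < m := by rw [hm_def]; linarith
    have hm2 : m ≤ b := by rw [hm_def]; linarith
    have ham : a ≤ m := by rw [hm_def]; linarith
    have h1 : (0:ℝ) ≤ ∫ s in a..m, δ s :=
      intervalIntegral.integral_nonneg ham (fun u hu => hδ_nonneg u (ha0.trans hu.1))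
    have h2 : (b - m) * δ (m) ≤ ∫ s in m..b, δ s := by
      have := intervalIntegral.integral_mono_on hm2
        (_root_.intervalIntegrable_const (c := δ (m))) (hint _ _ hm.le hb0)
        (fun u hu => hmono hm.le (hm.le.trans hu.1) hu.1)
      simpa using this
    have hsplit2 : (∫ s in a..m, δ s) + (∫ s in m..b, δ s) = ∫ s in a..b, δ s :=
      intervalIntegral.integral_add_adjacent_intervals (hint a _ ha0 hm.le) (hint _ b hm.le hb0)
    have hposint : 0 < ∫ s in a..b, δ s := by
      rw [← hsplit2]
      have : 0 < (b - m) * δ (m) :=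
        mul_pos (by rw [hm_def]; linarith) (hpos _ hm)
      linarith
    linarith
  · simp
  · intro s hs
    exact intervalIntegral.integral_nonneg hs (fun u hu => hδ_nonneg u hu.1)
  · -- Tendsto atTop
    have hδ1 : 0 < δ 1 := hpos 1 one_pos
    apply Filter.tendsto_atTop_mono' atTop
      (show ∀ᶠ r in atTop, (r - 1) * δ 1 ≤ ∫ s in (0:ℝ)..r, δ s from ?_) ?_
    · filter_upwards [Filter.eventually_ge_atTop (1:ℝ)] with r hr
      have hr0 : (0:ℝ) ≤ r := by linarith
      have hsplit : (∫ s in (0:ℝ)..1, δ s) + (∫ s in (1:ℝ)..r, δ s) = ∫ s in (0:ℝ)..r, δ s :=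
        intervalIntegral.integral_add_adjacent_intervals (hint 0 1 le_rfl zero_le_one)
          (hint 1 r zero_le_one hr0)
      have h1 : (0:ℝ) ≤ ∫ s in (0:ℝ)..1, δ s :=
        intervalIntegral.integral_nonneg zero_le_one (fun u hu => hδ_nonneg u hu.1)
      have h2 : (r - 1) * δ 1 ≤ ∫ s in (1:ℝ)..r, δ s := by
        have := intervalIntegral.integral_mono_on hr
          (_root_.intervalIntegrable_const (c := δ 1)) (hint 1 r zero_le_one hr0)
          (fun u hu => hmono (zero_le_one : (0:ℝ) ≤ 1) (zero_le_one.trans hu.1) hu.1)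
        simpa using this
      linarith
    · exact (Filter.tendsto_atTop_add_const_right _ (-1) tendsto_id).atTop_mul_const hδ1
end

section
/- Let S ⊆ ℝⁿ be closed with nonempty interior and complement, and let h : ℝⁿ → ℝ be continuous. If there exist extended class-K functions α₁, α₂ such that h(x)=0 on ∂S, α₁(dist(x, closure(ℝⁿ∖S))) ≤ h(x) ≤ α₂(dist(x, closure(ℝⁿ∖S))) for x ∈ interior(S), and α₂(−dist(x,S)) ≤ h(x) ≤ α₁(−dist(x,S)) for x ∉ S, then S = {x : h(x) ≥ 0}, ∂S = {x : h(x) = 0}, and interior(S) = {x : h(x) > 0}. -/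
open Filter Set Metric

/-- An extended class-K function: continuous, strictly increasing, vanishing at `0`. -/
def ExtClassK (α : ℝ → ℝ) : Prop :=
  Continuous α ∧ StrictMono α ∧ α 0 = 0

/-- If a continuous `h` vanishes on `∂S` and is sandwiched between extended
class-K functions of the signed distance to the boundary of the closed set `S`,
then `S = {x : h(x) ≥ 0}`, `∂S = {x : h(x) = 0}` and `int S = {x : h(x) > 0}`. -/
theorem barrier_candidate_level_sets
    (n : ℕ) (S : Set (EuclideanSpace ℝ (Fin n)))
    (hS_closed : IsClosed S)
    (hS_int : (interior S).Nonempty)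
    (hS_compl : Sᶜ.Nonempty)
    (h : EuclideanSpace ℝ (Fin n) → ℝ)
    (hcont : Continuous h)
    (α₁ α₂ : ℝ → ℝ)
    (hα₁ : ExtClassK α₁) (hα₂ : ExtClassK α₂)
    (hbd : ∀ x ∈ frontier S, h x = 0)
    (hin : ∀ x ∈ interior S,
      α₁ (infDist x (closure Sᶜ)) ≤ h x ∧ h x ≤ α₂ (infDist x (closure Sᶜ)))
    (hout : ∀ x ∉ S, α₂ (-(infDist x S)) ≤ h x ∧ h x ≤ α₁ (-(infDist x S))) :
    S = {x | 0 ≤ h x} ∧ frontier S = {x | h x = 0} ∧ interior S = {x | 0 < h x} := by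
  obtain ⟨_, hα₁mono, hα₁0⟩ := hα₁
  -- positivity on the interior
  have hpos : ∀ x ∈ interior S, 0 < h x := by
    intro x hx
    have hxnot : x ∉ closure Sᶜ := by
      rw [closure_compl]
      simpa using hx
    have hd : 0 < infDist x (closure Sᶜ) :=
      (IsClosed.notMem_iff_infDist_pos isClosed_closure
        (hS_compl.mono subset_closure)).mp hxnot
    have := (hin x hx).1
    have : α₁ 0 < α₁ (infDist x (closure Sᶜ)) := hα₁mono hd
    linarith [(hin x hx).1]
  -- negativity outside
  have hneg : ∀ x ∉ S, h x < 0 := by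
    intro x hx
    have hSne : S.Nonempty := hS_int.mono interior_subset
    have hd : 0 < infDist x S :=
      (IsClosed.notMem_iff_infDist_pos hS_closed hSne).mp hx
    have : α₁ (-(infDist x S)) < α₁ 0 := hα₁mono (by linarith)
    linarith [(hout x hx).2]
  have hfr : frontier S = S \ interior S := by
    rw [frontier, hS_closed.closure_eq]
  refine ⟨?_, ?_, ?_⟩
  · ext x
    simp only [mem_setOf_eq]
    constructor
    · intro hx
      by_cases hxi : x ∈ interior S
      · exact (hpos x hxi).le
      · exact (hbd x (by rw [hfr]; exact ⟨hx, hxi⟩)).ge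
    · intro hx
      by_contra hxS
      exact absurd hx (not_le.mpr (hneg x hxS))
  · ext x
    simp only [mem_setOf_eq]
    constructor
    · exact hbd x
    · intro hx
      rw [hfr]
      constructor
      · by_contra hxS
        exact absurd hx (hneg x hxS).ne
      · intro hxi
        exact absurd hx (hpos x hxi).ne'
  · ext x
    simp only [mem_setOf_eq]
    constructor
    · exact hpos x
    · intro hx
      by_contra hxi
      by_cases hxS : x ∈ S
      · have := hbd x (by rw [hfr]; exact ⟨hxS, hxi⟩)
        linarith
      · linarith [hneg x hxS]
end

section
/- Let S = {x ∈ ℝ : x ≥ 0} and consider the scalar system ẋ = −x. There is no continuously differentiable function h : ℝ → ℝ satisfying the barrier-candidate sector bounds (h = 0 on ∂S, h sandwiched between extended class-K functions of the signed distance to the boundary) such that h'(x)·(−x) ≥ 0 for all x in an open set containing S. In other words, the safe system ẋ = −x admits no barrier certificate. -/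
open Filter Set

/-- The safe scalar system `ẋ = -x` with safe set `S = [0,∞)` admits no barrier
certificate: there is no continuously differentiable `h : ℝ → ℝ` vanishing at `0`
(the boundary of `S`), sandwiched between extended class-K functions of the signed
distance to the boundary, and satisfying `h'(x)·(−x) ≥ 0` on an open set containing `S`. -/
theorem no_barrier_certificate_for_safe_scalar_system :
    ¬ ∃ (h : ℝ → ℝ) (α₁ α₂ : ℝ → ℝ) (D : Set ℝ),
      ContDiff ℝ 1 h ∧
      ExtClassK α₁ ∧ ExtClassK α₂ ∧
      h 0 = 0 ∧
      (∀ x : ℝ, 0 < x → α₁ x ≤ h x ∧ h x ≤ α₂ x) ∧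
      (∀ x : ℝ, x < 0 → α₂ x ≤ h x ∧ h x ≤ α₁ x) ∧
      IsOpen D ∧ Set.Ici (0:ℝ) ⊆ D ∧
      (∀ x ∈ D, deriv h x * (-x) ≥ 0) := by
  rintro ⟨h, α₁, α₂, D, hC1, hK1, hK2, h0, hpos, hneg, hDopen, hDsub, hder⟩
  have hdiff : Differentiable ℝ h := hC1.differentiable one_ne_zero
  -- on (0,∞), deriv h ≤ 0
  have hderiv_nonpos : ∀ x ∈ interior (Set.Ici (0:ℝ)), deriv h x ≤ 0 := by
    intro x hx
    rw [interior_Ici] at hx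
    have hxD : x ∈ D := hDsub (Set.mem_Ici.mpr (le_of_lt (Set.mem_Ioi.mp hx)))
    have := hder x hxD
    have hx' : (0:ℝ) < x := hx
    nlinarith
  have hanti : AntitoneOn h (Set.Ici (0:ℝ)) :=
    antitoneOn_of_deriv_nonpos (convex_Ici 0) hdiff.continuous.continuousOn
      (fun x hx => (hdiff x).differentiableWithinAt) hderiv_nonpos
  have h1 : h 1 ≤ h 0 := hanti (le_refl (0:ℝ) : (0:ℝ) ∈ Set.Ici 0) (by norm_num) (by norm_num)
  have hα1 : (0:ℝ) < α₁ 1 := by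
    have := hK1.2.1 (show (0:ℝ) < 1 by norm_num)
    rw [hK1.2.2] at this
    exact this
  have := (hpos 1 (by norm_num)).1
  linarith [h1, hα1, this, h0.le]
end

section
/- Let ρ, α₁ ∈ class-K∞ and suppose h : ℝⁿ → ℝ satisfies α₁(−dist(x,S)) ≥ h(x) for x ∉ S (with α₁ extended class-K). If h(x) ≥ −η(‖w‖) for an extended class-K function η, then dist(x, S) ≤ ρ(‖w‖) where ρ(s) = −α₁⁻¹(−η(s)). Conversely, if α₂(−dist(x,S)) ≤ h(x) holds outside S and dist(x,S) ≤ ρ(‖w‖), then h(x) ≥ −η(‖w‖) with η(s) = −α₂(−ρ(s)). Hence the two ISSf-set descriptions S_w = {x : dist(x,S) ≤ ρ(‖w‖)} and S_w = {x : h(x) + η(‖w‖) ≥ 0} are equivalent. -/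
open Filter Set Metric

/-- A class-K function (on `[0,∞)`). -/
def ClassK (γ : ℝ → ℝ) : Prop :=
  ContinuousOn γ (Set.Ici 0) ∧ StrictMonoOn γ (Set.Ici 0) ∧ γ 0 = 0 ∧
    ∀ s, 0 ≤ s → 0 ≤ γ s

/-- Equivalence of the two ISSf-set descriptions
`S_w = {x : dist(x,S) ≤ ρ(‖w‖)}` and `S_w = {x : h(x) + η(‖w‖) ≥ 0}`:
(1) if `h(x) ≥ −η(‖w‖)` then `dist(x,S) ≤ ρ(‖w‖)` with `ρ(s) = −α₁⁻¹(−η(s))`;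
(2) conversely, if `dist(x,S) ≤ ρ(‖w‖)` for a class-K∞ `ρ`, then
`h(x) ≥ −η(‖w‖)` with `η(s) = −α₂(−ρ(s))`. -/
theorem issf_set_descriptions_equivalent
    (n : ℕ) (h : EuclideanSpace ℝ (Fin n) → ℝ)
    (S : Set (EuclideanSpace ℝ (Fin n)))
    (hS_def : S = {x | 0 ≤ h x})
    (α₁ α₂ : ℝ → ℝ)
    (hα₁ : ExtClassK α₁) (hα₂ : ExtClassK α₂)
    (hout : ∀ x ∉ S, α₂ (-(infDist x S)) ≤ h x ∧ h x ≤ α₁ (-(infDist x S)))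
    (α₁inv : ℝ → ℝ)
    (hinv_left : Function.LeftInverse α₁inv α₁)
    (hinv_right : Function.RightInverse α₁inv α₁) :
    (∀ (η : ℝ → ℝ), ClassK η →
      ∀ x, ∀ w : ℝ, 0 ≤ w → -(η w) ≤ h x →
        infDist x S ≤ -(α₁inv (-(η w)))) ∧
    (∀ (ρ : ℝ → ℝ), ClassK ρ →
      ∀ x, x ∉ S → ∀ w : ℝ, 0 ≤ w → infDist x S ≤ ρ w →
        -(-(α₂ (-(ρ w)))) ≤ h x) := by
  obtain ⟨hα₁c, hα₁m, hα₁0⟩ := hα₁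
  obtain ⟨hα₂c, hα₂m, hα₂0⟩ := hα₂
  have hinv_mono : ∀ a b : ℝ, a ≤ b → α₁inv a ≤ α₁inv b := by
    intro a b hab
    have : α₁ (α₁inv a) ≤ α₁ (α₁inv b) := by rw [hinv_right a, hinv_right b]; exact hab
    exact (hα₁m.le_iff_le).mp this
  constructor
  · intro η hη x w hw hhx
    obtain ⟨_, _, hη0, hηpos⟩ := hη
    have hηw : 0 ≤ η w := hηpos w hw
    by_cases hxS : x ∈ S
    · have : infDist x S = 0 := infDist_zero_of_mem hxS
      rw [this]
      have h1 : -(η w) ≤ α₁ 0 := by rw [hα₁0]; linarith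
      have h2 : α₁inv (-(η w)) ≤ 0 := by
        have := hinv_mono _ _ h1
        rwa [hinv_left 0] at this
      linarith
    · have hub := (hout x hxS).2
      have h1 : -(η w) ≤ α₁ (-(infDist x S)) := le_trans hhx hub
      have h2 : α₁inv (-(η w)) ≤ -(infDist x S) := by
        have := hinv_mono _ _ h1
        rwa [hinv_left] at this
      linarith
  · intro ρ hρ x hxS w hw hd
    have hlb := (hout x hxS).1
    have : α₂ (-(ρ w)) ≤ α₂ (-(infDist x S)) :=
      hα₂m.monotone (by linarith)
    rw [neg_neg]
    linarith
end

section
/- Let γ : ℝ≥0 × ℝ≥0 → ℝ≥0 be continuous with γ(r,0)=0=γ(0,s) for all r,s, and such that r ↦ γ(r,s) and s ↦ γ(r,s) are class-K for each fixed positive value of the other argument. Then there exists a class-K function γ̃ such that γ(r,s) ≤ γ̃(r)·γ̃(s) for all r,s ≥ 0. -/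
open Filter Set

private lemma exists_classK_bound (u : ℝ → ℝ) (hmono : Monotone u) (h0 : u 0 = 0)
    (hnn : ∀ t, 0 ≤ u t) (hlim : Tendsto u (nhdsWithin 0 (Set.Ici 0)) (nhds 0)) :
    ∃ v, ClassK v ∧ ∀ t, 0 ≤ t → u t ≤ v t := by
  have hint : ∀ a b : ℝ, IntervalIntegrable u MeasureTheory.volume a b :=
    fun a b => hmono.intervalIntegrable
  set F : ℝ → ℝ := fun x => ∫ y in (0:ℝ)..x, u y with hF_def
  have hFc : Continuous F := intervalIntegral.continuous_primitive hint 0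
  set v : ℝ → ℝ := fun t => t + ∫ x in (1:ℝ)..2, u (t * x) with hv_def
  -- integrability of the composition
  have hci : ∀ t : ℝ, 0 ≤ t → IntervalIntegrable (fun x => u (t * x)) MeasureTheory.volume 1 2 := by
    intro t ht
    have : MonotoneOn (fun x => u (t * x)) (Set.uIcc 1 2) := by
      intro x _ y _ hxy
      exact hmono (mul_le_mul_of_nonneg_left hxy ht)
    exact this.intervalIntegrable
  -- v t ≥ u t for t ≥ 0
  have hvc : ∀ t : ℝ, 0 ≤ t → u t ≤ v t := by
    intro t ht
    have h1 : u t = ∫ x in (1:ℝ)..2, u t := by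
      rw [intervalIntegral.integral_const]
      norm_num
    have h2 : (∫ x in (1:ℝ)..2, u t) ≤ ∫ x in (1:ℝ)..2, u (t * x) := by
      apply intervalIntegral.integral_mono_on (by norm_num) (by simp) (hci t ht)
      intro x hx
      exact hmono (by nlinarith [hx.1])
    have : u t ≤ ∫ x in (1:ℝ)..2, u (t * x) := h1 ▸ h2
    simp only [hv_def]
    linarith
  -- nonneg
  have hvnn : ∀ t : ℝ, 0 ≤ t → 0 ≤ v t := by
    intro t ht
    have := hvc t ht
    linarith [hnn t]
  -- strict mono
  have hvm : StrictMonoOn v (Set.Ici 0) := by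
    intro a ha b hb hab
    simp only [hv_def]
    have : (∫ x in (1:ℝ)..2, u (a * x)) ≤ ∫ x in (1:ℝ)..2, u (b * x) := by
      apply intervalIntegral.integral_mono_on (by norm_num) (hci a ha) (hci b hb)
      intro x hx
      exact hmono (mul_le_mul_of_nonneg_right hab.le (by linarith [hx.1]))
    linarith
  -- continuity
  have hveq : ∀ t : ℝ, 0 < t → v t = t + t⁻¹ * (F (2 * t) - F t) := by
    intro t ht
    have h1 : (∫ x in (1:ℝ)..2, u (t * x)) = t⁻¹ • ∫ x in (t*1)..(t*2), u x :=
      intervalIntegral.integral_comp_mul_left u ht.ne'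
    have h2 : F (2 * t) - F t = ∫ x in t..2 * t, u x :=
      intervalIntegral.integral_interval_sub_left (hint 0 (2*t)) (hint 0 t)
    simp only [hv_def, h1, smul_eq_mul, mul_one]
    rw [h2]
    ring_nf
  have hvcont : ContinuousOn v (Set.Ici 0) := by
    intro t ht
    rcases eq_or_lt_of_le (mem_Ici.mp ht : (0:ℝ) ≤ t) with h | h
    · -- at zero: squeeze
      have h2s : Tendsto (fun s : ℝ => 2*s) (nhdsWithin 0 (Set.Ici 0)) (nhdsWithin 0 (Set.Ici 0)) := by
        apply tendsto_nhdsWithin_of_tendsto_nhds_of_eventually_within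
        · have h2c : Tendsto (fun s : ℝ => 2*s) (nhds 0) (nhds 0) := by
            exact (by simpa using (continuous_const.mul continuous_id).tendsto (0:ℝ) : Tendsto ((fun _ : ℝ => (2:ℝ)) * id) (nhds 0) (nhds 0))
          exact h2c.mono_left nhdsWithin_le_nhds
        · filter_upwards [self_mem_nhdsWithin] with s hs
          exact mul_nonneg (by norm_num) (mem_Ici.mp hs)
      have hupper : Tendsto (fun s : ℝ => s + u (2*s)) (nhdsWithin 0 (Set.Ici 0)) (nhds 0) := by
        have := (hlim.comp h2s)
        simpa using (tendsto_id.mono_left nhdsWithin_le_nhds).add this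
      have hub : ∀ s ∈ Set.Ici (0:ℝ), v s ≤ s + u (2*s) := by
        intro s hs
        have : (∫ x in (1:ℝ)..2, u (s * x)) ≤ ∫ x in (1:ℝ)..2, u (2*s) := by
          apply intervalIntegral.integral_mono_on (by norm_num) (hci s hs) (by simp)
          intro x hx
          exact hmono (by rw [mul_comm 2 s]; exact mul_le_mul_of_nonneg_left hx.2 hs)
        have h3 : (∫ x in (1:ℝ)..2, u (2*s)) = u (2*s) := by
          rw [intervalIntegral.integral_const]; norm_num
        simp only [hv_def]; linarith [h3 ▸ this]
      have hv0 : v 0 = 0 := by simp [hv_def, h0]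
      rw [ContinuousWithinAt, ← h, hv0]
      apply tendsto_of_tendsto_of_tendsto_of_le_of_le' tendsto_const_nhds hupper
      · filter_upwards [self_mem_nhdsWithin] with s hs using hvnn s hs
      · filter_upwards [self_mem_nhdsWithin] with s hs using hub s hs
    · -- t > 0
      have hw : ContinuousAt (fun t : ℝ => t + t⁻¹ * (F (2 * t) - F t)) t := by
        apply ContinuousAt.add continuousAt_id
        apply ContinuousAt.mul (continuousAt_inv₀ h.ne')
        exact ((hFc.continuousAt).comp (by fun_prop)).sub hFc.continuousAt
      have : ContinuousAt v t := by
        apply hw.congr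
        filter_upwards [eventually_gt_nhds h] with s hs
        exact (hveq s hs).symm
      exact this.continuousWithinAt
  refine ⟨v, ⟨hvcont, hvm, ?_, hvnn⟩, hvc⟩
  simp [hv_def, h0]

/-- Factorization of a two-argument class-K function (Angeli–Sontag):
if `γ(r,s)` is continuous, vanishes whenever either argument is `0`, and is
class-K in each argument for each fixed positive value of the other, then
`γ(r,s) ≤ γ̃(r)·γ̃(s)` for some class-K function `γ̃`. -/
theorem two_argument_classK_factorization
    (γ : ℝ → ℝ → ℝ)
    (hcont : ContinuousOn (fun p : ℝ × ℝ => γ p.1 p.2) (Set.Ici 0 ×ˢ Set.Ici 0))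
    (hzero_right : ∀ r, 0 ≤ r → γ r 0 = 0)
    (hzero_left : ∀ s, 0 ≤ s → γ 0 s = 0)
    (hK_left : ∀ s, 0 < s → StrictMonoOn (fun r => γ r s) (Set.Ici 0))
    (hK_right : ∀ r, 0 < r → StrictMonoOn (fun s => γ r s) (Set.Ici 0))
    (hnonneg : ∀ r s, 0 ≤ r → 0 ≤ s → 0 ≤ γ r s) :
    ∃ γ', ClassK γ' ∧ ∀ r s, 0 ≤ r → 0 ≤ s → γ r s ≤ γ' r * γ' s := by
  -- monotonicity in each argument
  have mono1 : ∀ s, 0 ≤ s → ∀ r r', 0 ≤ r → r ≤ r' → γ r s ≤ γ r' s := by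
    intro s hs r r' hr hrr
    rcases eq_or_lt_of_le hs with h | h
    · rw [← h, hzero_right r hr, hzero_right r' (hr.trans hrr)]
    · exact (hK_left s h).monotoneOn (mem_Ici.mpr hr) (mem_Ici.mpr (hr.trans hrr)) hrr
  have mono2 : ∀ r, 0 ≤ r → ∀ s s', 0 ≤ s → s ≤ s' → γ r s ≤ γ r s' := by
    intro r hr s s' hs hss
    rcases eq_or_lt_of_le hr with h | h
    · rw [← h, hzero_left s hs, hzero_left s' (hs.trans hss)]
    · exact (hK_right r h).monotoneOn (mem_Ici.mpr hs) (mem_Ici.mpr (hs.trans hss)) hss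
  -- single-variable continuity helpers
  have hcont1 : ∀ c, 0 ≤ c → ContinuousOn (fun t => γ t c) (Set.Ici 0) := by
    intro c hc
    exact hcont.comp (Continuous.continuousOn (by fun_prop))
      (fun t ht => Set.mk_mem_prod ht (mem_Ici.mpr hc))
  have hcont2 : ∀ c, 0 ≤ c → ContinuousOn (fun t => γ c t) (Set.Ici 0) := by
    intro c hc
    exact hcont.comp (Continuous.continuousOn (by fun_prop))
      (fun t ht => Set.mk_mem_prod (mem_Ici.mpr hc) ht)
  have hcontd : ContinuousOn (fun t => γ t t) (Set.Ici 0) :=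
    hcont.comp (Continuous.continuousOn (by fun_prop))
      (fun t ht => Set.mk_mem_prod ht ht)
  -- the auxiliary functions
  set g : ℝ → ℝ := fun s => (1 + s) * (1 + 2 * γ s s) with hg_def
  set p : ℝ → ℝ → ℝ := fun t s => γ t s + γ s t with hp_def
  have hg1 : ∀ s, 0 ≤ s → 1 ≤ g s := by
    intro s hs; have := hnonneg s s hs hs; simp only [hg_def]; nlinarith
  have hgpos : ∀ s, 0 ≤ s → 0 < g s := fun s hs => lt_of_lt_of_le one_pos (hg1 s hs)
  have hgmono : ∀ s t, 0 ≤ s → s ≤ t → g s ≤ g t := by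
    intro s t hs hst
    have h1 : γ s s ≤ γ t s := mono1 s hs s t hs hst
    have h2 : γ t s ≤ γ t t := mono2 t (hs.trans hst) s t hs hst
    simp only [hg_def]; nlinarith [hnonneg s s hs hs]
  have hpnn : ∀ t s, 0 ≤ t → 0 ≤ s → 0 ≤ p t s := by
    intro t s ht hs; simp only [hp_def]
    exact add_nonneg (hnonneg t s ht hs) (hnonneg s t hs ht)
  have hpmono1 : ∀ t t' s, 0 ≤ t → t ≤ t' → 0 ≤ s → p t s ≤ p t' s := by
    intro t t' s ht htt hs; simp only [hp_def]
    exact add_le_add (mono1 s hs t t' ht htt) (mono2 s hs t t' ht htt)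
  -- tail bound : for t ≤ s, p t s / g s ≤ 1/(1+s)
  have hpb2 : ∀ t s, 0 ≤ t → t ≤ s → p t s / g s ≤ 1 / (1 + s) := by
    intro t s ht hts
    have hs : (0:ℝ) ≤ s := ht.trans hts
    have h1 : γ t s ≤ γ s s := mono1 s hs t s ht hts
    have h2 : γ s t ≤ γ s s := mono2 s hs t s ht hts
    rw [div_le_div_iff₀ (hgpos s hs) (by linarith : (0:ℝ) < 1 + s)]
    simp only [hp_def, hg_def]
    nlinarith [hnonneg s s hs hs]
  -- crude bound, for boundedness of the sup
  have hpb : ∀ t s, 0 ≤ t → 0 ≤ s → p t s / g s ≤ 2 * γ t t + 1 := by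
    intro t s ht hs
    rcases le_total s t with h | h
    · have h1 : γ t s ≤ γ t t := mono2 t ht s t hs h
      have h2 : γ s t ≤ γ t t := mono1 t ht s t hs h
      have := div_le_self (hpnn t s ht hs) (hg1 s hs)
      have hpts : p t s ≤ 2 * γ t t := by simp only [hp_def]; linarith
      linarith
    · have := hpb2 t s ht h
      have h2 : 1 / (1 + s) ≤ 1 := by
        rw [div_le_one (by linarith : (0:ℝ) < 1 + s)]; linarith
      have := hnonneg t t ht ht
      linarith
  -- the sup function q
  set q : ℝ → ℝ := fun t => ⨆ s : Set.Ici (0:ℝ), p t s / g s with hq_def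
  have hqbdd : ∀ t, 0 ≤ t → BddAbove (Set.range fun s : Set.Ici (0:ℝ) => p t s / g s) := by
    intro t ht
    refine ⟨2 * γ t t + 1, ?_⟩
    rintro x ⟨⟨s, hs⟩, rfl⟩
    exact hpb t s ht hs
  have hqle : ∀ t s, 0 ≤ t → 0 ≤ s → p t s / g s ≤ q t := by
    intro t s ht hs
    exact le_ciSup (hqbdd t ht) ⟨s, hs⟩
  have hqup : ∀ t (b : ℝ), (∀ s, 0 ≤ s → p t s / g s ≤ b) → q t ≤ b := by
    intro t b hb
    exact ciSup_le (fun s => hb s s.2)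
  have hqnn : ∀ t, 0 ≤ t → 0 ≤ q t := by
    intro t ht
    have h0 : p t 0 / g 0 = 0 := by
      simp only [hp_def, hzero_right t ht, hzero_left t ht]
      simp
    calc (0:ℝ) = p t 0 / g 0 := h0.symm
      _ ≤ q t := hqle t 0 ht le_rfl
  have hq0 : q 0 = 0 := by
    refine le_antisymm (hqup 0 0 ?_) (hqnn 0 le_rfl)
    intro s hs
    simp only [hp_def, hzero_right s hs, hzero_left s hs]
    simp
  have hqmono : ∀ t t', 0 ≤ t → t ≤ t' → q t ≤ q t' := by
    intro t t' ht htt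
    refine hqup t (q t') (fun s hs => ?_)
    refine le_trans ?_ (hqle t' s (ht.trans htt) hs)
    exact div_le_div_of_nonneg_right (hpmono1 t t' s ht htt hs) (hgpos s hs).le
  -- the small-scale function w
  set w : ℝ → ℝ := fun t => Real.sqrt (γ (min t 1) 1 + γ 1 (min t 1)) with hw_def
  have hwnn : ∀ t, 0 ≤ w t := fun t => Real.sqrt_nonneg _
  have hw0 : w 0 = 0 := by
    simp only [hw_def, min_eq_left (by norm_num : (0:ℝ) ≤ 1),
      hzero_left 1 zero_le_one, hzero_right 1 zero_le_one]
    simp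
  have hwmono : ∀ t t', 0 ≤ t → t ≤ t' → w t ≤ w t' := by
    intro t t' ht htt
    apply Real.sqrt_le_sqrt
    have hm : min t 1 ≤ min t' 1 := min_le_min htt le_rfl
    have hm0 : 0 ≤ min t 1 := le_min ht zero_le_one
    exact add_le_add (mono1 1 zero_le_one _ _ hm0 hm) (mono2 1 zero_le_one _ _ hm0 hm)
  -- the combined function u
  set Q : ℝ → ℝ := fun t => q t + t * g t + w t with hQ_def
  set u : ℝ → ℝ := fun t => Q (max t 0) with hu_def
  have humax : ∀ t, 0 ≤ t → u t = q t + t * g t + w t := by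
    intro t ht; simp only [hu_def, hQ_def, max_eq_left ht]
  have hunn : ∀ t, 0 ≤ u t := by
    intro t
    simp only [hu_def, hQ_def]
    have h0 : (0:ℝ) ≤ max t 0 := le_max_right t 0
    have := hqnn _ h0
    have := hwnn (max t 0)
    have := mul_nonneg h0 (le_of_lt (hgpos _ h0))
    linarith
  have humono : Monotone u := by
    intro a b hab
    simp only [hu_def, hQ_def]
    have h0a : (0:ℝ) ≤ max a 0 := le_max_right a 0
    have h0b : (0:ℝ) ≤ max b 0 := le_max_right b 0
    have hab' : max a 0 ≤ max b 0 := max_le_max hab le_rfl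
    have h1 := hqmono _ _ h0a hab'
    have h2 : max a 0 * g (max a 0) ≤ max b 0 * g (max b 0) :=
      mul_le_mul hab' (hgmono _ _ h0a hab') (le_of_lt (hgpos _ h0a)) h0b
    have h3 := hwmono _ _ h0a hab'
    linarith
  have hu0 : u 0 = 0 := by
    simp only [hu_def, hQ_def, max_self]
    rw [hq0, hw0]; ring
  -- limit of q at 0+
  have hqlim : Tendsto q (nhdsWithin 0 (Set.Ici 0)) (nhds 0) := by
    rw [Metric.tendsto_nhdsWithin_nhds]
    intro ε hε
    set S : ℝ := max 1 (2 / ε) with hS_def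
    have hS1 : (1:ℝ) ≤ S := le_max_left _ _
    have hS0 : (0:ℝ) ≤ S := zero_le_one.trans hS1
    have hSε : 1 / (1 + S) ≤ ε / 2 := by
      have h2 : 2 / ε ≤ S := le_max_right _ _
      rw [div_le_div_iff₀ (by linarith : (0:ℝ) < 1 + S) (by linarith : (0:ℝ) < 2)]
      have : 2 / ε * ε ≤ S * ε := mul_le_mul_of_nonneg_right h2 hε.le
      rw [div_mul_cancel₀ 2 hε.ne'] at this
      nlinarith
    -- continuity of φ at 0
    have hφ : ContinuousWithinAt (fun t => γ t S + γ S t) (Set.Ici 0) 0 :=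
      ((hcont1 S hS0 0 (mem_Ici.mpr le_rfl)).add (hcont2 S hS0 0 (mem_Ici.mpr le_rfl)))
    rw [Metric.continuousWithinAt_iff] at hφ
    obtain ⟨δ, hδpos, hδ⟩ := hφ (ε / 2) (by linarith)
    refine ⟨min δ 1, lt_min hδpos one_pos, ?_⟩
    intro t ht hdist
    have ht0 : (0:ℝ) ≤ t := ht
    have htδ : dist t 0 < δ := lt_of_lt_of_le hdist (min_le_left _ _)
    have ht1 : t < 1 := by
      have := lt_of_lt_of_le hdist (min_le_right _ _)
      rwa [Real.dist_eq, sub_zero, abs_of_nonneg ht0] at this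
    have hφt : γ t S + γ S t < ε / 2 := by
      have := hδ ht htδ
      rw [Real.dist_eq, hzero_left S hS0, hzero_right S hS0] at this
      have hnn' : 0 ≤ γ t S + γ S t :=
        add_nonneg (hnonneg t S ht0 hS0) (hnonneg S t hS0 ht0)
      rw [add_zero, sub_zero, abs_of_nonneg hnn'] at this
      linarith
    have hq_bound : q t ≤ (γ t S + γ S t) + ε / 2 := by
      refine hqup t _ (fun s hs => ?_)
      rcases le_total s S with h | h
      · have h1 : p t s / g s ≤ p t s := div_le_self (hpnn t s ht0 hs) (hg1 s hs)
        have h2 : p t s ≤ γ t S + γ S t := by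
          simp only [hp_def]
          exact add_le_add (mono2 t ht0 s S hs h) (mono1 t ht0 s S hs h)
        have hnn' : 0 ≤ ε / 2 := by linarith
        calc p t s / g s ≤ p t s := h1
          _ ≤ γ t S + γ S t := h2
          _ ≤ γ t S + γ S t + ε / 2 := by linarith
      · have h1 : p t s / g s ≤ 1 / (1 + s) :=
          hpb2 t s ht0 (le_trans (le_trans ht1.le hS1) h)
        have h2 : 1 / (1 + s) ≤ 1 / (1 + S) := by
          apply div_le_div_of_nonneg_left one_pos.le (by linarith) (by linarith)
        have hnn' : 0 ≤ γ t S + γ S t :=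
          add_nonneg (hnonneg t S ht0 hS0) (hnonneg S t hS0 ht0)
        linarith
    rw [Real.dist_eq, sub_zero, abs_of_nonneg (hqnn t ht0)]
    linarith
  -- limit of u at 0+
  have hulim : Tendsto u (nhdsWithin 0 (Set.Ici 0)) (nhds 0) := by
    have htg : Tendsto (fun t => t * g t) (nhdsWithin 0 (Set.Ici 0)) (nhds 0) := by
      have hgc : ContinuousWithinAt g (Set.Ici 0) 0 := by
        have : ContinuousWithinAt (fun t => γ t t) (Set.Ici 0) 0 :=
          hcontd 0 (mem_Ici.mpr le_rfl)
        simp only [hg_def]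
        exact (continuousWithinAt_const.add continuousWithinAt_id).mul
          (continuousWithinAt_const.add (continuousWithinAt_const.mul this))
      have := (continuousWithinAt_id.mul hgc)
      exact (by simpa using this.tendsto : Tendsto (id * g) (nhdsWithin 0 (Set.Ici 0)) (nhds 0))
    have hwlim : Tendsto w (nhdsWithin 0 (Set.Ici 0)) (nhds 0) := by
      have hmc : ContinuousWithinAt (fun t : ℝ => min t 1) (Set.Ici 0) 0 :=
        (continuousWithinAt_id.min continuousWithinAt_const)
      have hmaps : MapsTo (fun t : ℝ => min t 1) (Set.Ici 0) (Set.Ici 0) := by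
        intro t ht; exact le_min (mem_Ici.mp ht) zero_le_one
      have h01 : min (0:ℝ) 1 = 0 := by norm_num
      have hg1' : ContinuousWithinAt (fun t => γ t 1) (Set.Ici 0) (min (0:ℝ) 1) := by
        rw [h01]; exact hcont1 1 zero_le_one 0 (mem_Ici.mpr le_rfl)
      have hg2' : ContinuousWithinAt (fun t => γ 1 t) (Set.Ici 0) (min (0:ℝ) 1) := by
        rw [h01]; exact hcont2 1 zero_le_one 0 (mem_Ici.mpr le_rfl)
      have h1 : ContinuousWithinAt (fun t => γ (min t 1) 1) (Set.Ici 0) 0 :=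
        ContinuousWithinAt.comp (g := fun t => γ t 1) (f := fun t : ℝ => min t 1)
          hg1' hmc hmaps
      have h2 : ContinuousWithinAt (fun t => γ 1 (min t 1)) (Set.Ici 0) 0 :=
        ContinuousWithinAt.comp (g := fun t => γ 1 t) (f := fun t : ℝ => min t 1)
          hg2' hmc hmaps
      have hwc : ContinuousWithinAt w (Set.Ici 0) 0 :=
        Real.continuous_sqrt.continuousAt.comp_continuousWithinAt (h1.add h2)
      have := hwc.tendsto
      rwa [hw0] at this
    have hQlim : Tendsto Q (nhdsWithin 0 (Set.Ici 0)) (nhds 0) := by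
      have := (hqlim.add htg).add hwlim
      simpa using this
    have : Tendsto (fun t : ℝ => max t 0) (nhdsWithin 0 (Set.Ici 0)) (nhdsWithin 0 (Set.Ici 0)) := by
      apply tendsto_nhdsWithin_of_tendsto_nhds_of_eventually_within
      · have h' : Tendsto (fun t : ℝ => max t 0) (nhds 0) (nhds (max (0:ℝ) 0)) :=
          (continuous_id.max continuous_const).tendsto (0:ℝ)
        rw [max_self] at h'
        exact h'.mono_left nhdsWithin_le_nhds
      · filter_upwards with t using le_max_right t 0
    exact hQlim.comp this
  -- the product inequality
  have hmain : ∀ r s, 0 ≤ r → 0 ≤ s → γ r s ≤ u r * u s := by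
    intro r s hr hs
    set a := min r s with ha_def
    set m := max r s with hm_def
    have ha : 0 ≤ a := le_min hr hs
    have hm : 0 ≤ m := le_trans hr (le_max_left r s)
    have ham : a ≤ m := min_le_max
    have key1 : γ r s ≤ p a m := by
      rcases le_total r s with h | h
      · have : a = r := min_eq_left h
        have hm' : m = s := max_eq_right h
        simp only [hp_def, this, hm']
        exact le_add_of_nonneg_right (hnonneg s r hs hr)
      · have : a = s := min_eq_right h
        have hm' : m = r := max_eq_left h
        simp only [hp_def, this, hm']
        exact le_add_of_nonneg_left (hnonneg s r hs hr)
    rcases le_or_gt m 1 with hm1 | hm1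
    · -- small case: use w
      have hr1 : r ≤ 1 := le_trans (le_max_left r s) hm1
      have hs1 : s ≤ 1 := le_trans (le_max_right r s) hm1
      have h1 : γ r s ≤ γ r 1 := mono2 r hr s 1 hs hs1
      have h2 : γ r s ≤ γ 1 s := mono1 s hs r 1 hr hr1
      have hwr : w r = Real.sqrt (γ r 1 + γ 1 r) := by
        simp only [hw_def, min_eq_left hr1]
      have hws : w s = Real.sqrt (γ s 1 + γ 1 s) := by
        simp only [hw_def, min_eq_left hs1]
      have hwr2 : w r * w r = γ r 1 + γ 1 r := by
        rw [hwr]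
        exact Real.mul_self_sqrt (add_nonneg (hnonneg r 1 hr zero_le_one) (hnonneg 1 r zero_le_one hr))
      have hws2 : w s * w s = γ s 1 + γ 1 s := by
        rw [hws]
        exact Real.mul_self_sqrt (add_nonneg (hnonneg s 1 hs zero_le_one) (hnonneg 1 s zero_le_one hs))
      have hsq : γ r s * γ r s ≤ (w r * w s) * (w r * w s) := by
        calc γ r s * γ r s ≤ γ r 1 * γ 1 s :=
              mul_le_mul h1 h2 (hnonneg r s hr hs) (hnonneg r 1 hr zero_le_one)
          _ ≤ (γ r 1 + γ 1 r) * (γ s 1 + γ 1 s) := by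
              nlinarith [hnonneg r 1 hr zero_le_one, hnonneg 1 r zero_le_one hr,
                hnonneg s 1 hs zero_le_one, hnonneg 1 s zero_le_one hs]
          _ = (w r * w s) * (w r * w s) := by
              rw [show (w r * w s) * (w r * w s) = (w r * w r) * (w s * w s) from by ring,
                hwr2, hws2]
      have hles : γ r s ≤ w r * w s := by
        nlinarith [hsq, mul_nonneg (hwnn r) (hwnn s), hnonneg r s hr hs]
      have hwru : w r ≤ u r := by
        rw [humax r hr]
        have := hqnn r hr
        have := mul_nonneg hr (le_of_lt (hgpos r hr))
        linarith
      have hwsu : w s ≤ u s := by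
        rw [humax s hs]
        have := hqnn s hs
        have := mul_nonneg hs (le_of_lt (hgpos s hs))
        linarith
      exact hles.trans (mul_le_mul hwru hwsu (hwnn s) (hunn r))
    · -- large case: use q and g
      have hkey : p a m ≤ q a * g m := by
        have h1 := hqle a m ha hm
        rwa [div_le_iff₀ (hgpos m hm)] at h1
      have hqa_u : q a ≤ u a := by
        rw [humax a ha]
        have := mul_nonneg ha (le_of_lt (hgpos a ha))
        have := hwnn a
        linarith
      have hgm_u : g m ≤ u m := by
        rw [humax m hm]
        have h1 : g m ≤ m * g m := le_mul_of_one_le_left (le_of_lt (hgpos m hm)) hm1.le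
        have := hqnn m hm
        have := hwnn m
        linarith
      have h2 : γ r s ≤ u a * u m := by
        calc γ r s ≤ p a m := key1
          _ ≤ q a * g m := hkey
          _ ≤ u a * u m :=
            mul_le_mul hqa_u hgm_u (le_of_lt (hgpos m hm)) (hunn a)
      rcases le_total r s with h | h
      · rwa [ha_def, hm_def, min_eq_left h, max_eq_right h] at h2
      · rw [ha_def, hm_def, min_eq_right h, max_eq_left h] at h2
        rw [mul_comm] at h2
        exact h2
  -- conclude
  obtain ⟨v, hv, hvge⟩ := exists_classK_bound u humono hu0 hunn hulim
  refine ⟨v, hv, fun r s hr hs => ?_⟩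
  calc γ r s ≤ u r * u s := hmain r s hr hs
    _ ≤ v r * v s :=
      mul_le_mul (hvge r hr) (hvge s hs) (hunn s) ((hunn r).trans (hvge r hr))
end

section
/- Let h : ℝ → ℝ be continuously differentiable, α an extended class-K function, and suppose h'(x)·f(x) ≥ −α(h(x)) for all x in ℝ with −δ < h(x), where f is locally Lipschitz. If x(t) is a solution of ẋ = f(x) with h(x(0)) ≥ 0, then h(x(t)) ≥ 0 for all t ≥ 0 in the maximal interval of existence (scalar comparison/ZBF safety lemma). -/
open Filter Set

/-- ZBF safety lemma (scalar comparison, sufficiency direction):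
if `h` is `C¹`, `f` locally Lipschitz, and `h'(x)·f(x) ≥ −α(h(x))` whenever
`−δ < h(x)`, then any solution of `ẋ = f(x)` starting with `h(x(0)) ≥ 0`
satisfies `h(x(t)) ≥ 0` on its interval of existence `[0,T]`. -/
theorem zbf_implies_safety
    (h f : ℝ → ℝ) (α : ℝ → ℝ) (δ : ℝ)
    (hδ : 0 < δ)
    (hh : ContDiff ℝ 1 h)
    (hf : LocallyLipschitz f)
    (hα : ExtClassK α)
    (hzbf : ∀ x : ℝ, -δ < h x → deriv h x * f x ≥ -α (h x))
    (T : ℝ) (hT : 0 ≤ T)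
    (x : ℝ → ℝ)
    (hsol : ∀ t ∈ Set.Icc 0 T, HasDerivAt x (f (x t)) t)
    (hinit : 0 ≤ h (x 0)) :
    ∀ t ∈ Set.Icc 0 T, 0 ≤ h (x t) := by
  set g : ℝ → ℝ := fun t => h (x t) with hg
  have hder : ∀ t ∈ Set.Icc 0 T, HasDerivAt g (deriv h (x t) * f (x t)) t := by
    intro t ht
    exact ((hh.differentiable one_ne_zero (x t)).hasDerivAt).comp t (hsol t ht)
  have hgc : ContinuousOn g (Set.Icc 0 T) := fun t ht =>
    ((hder t ht).continuousAt).continuousWithinAt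
  intro t₁ ht₁
  by_contra hneg
  push_neg at hneg
  set c : ℝ := max (-δ/2) (g t₁ / 2) with hc
  have hc0 : c < 0 := max_lt (by linarith) (by linarith)
  have hcδ : -δ < c := lt_of_lt_of_le (by linarith) (le_max_left _ _)
  have hct₁ : g t₁ ≤ c := le_trans (by linarith) (le_max_right _ _)
  have hsub₁ : Set.Icc (0:ℝ) t₁ ⊆ Set.Icc 0 T := Set.Icc_subset_Icc le_rfl ht₁.2
  -- A : first-hitting set of level c
  set A : Set ℝ := Set.Icc 0 t₁ ∩ g ⁻¹' Set.Iic c with hA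
  have hAne : A.Nonempty := ⟨t₁, ⟨ht₁.1, le_rfl⟩, hct₁⟩
  have hAclosed : IsClosed A :=
    ContinuousOn.preimage_isClosed_of_isClosed (hgc.mono hsub₁) isClosed_Icc isClosed_Iic
  have hAcpt : IsCompact A :=
    IsCompact.of_isClosed_subset isCompact_Icc hAclosed Set.inter_subset_left
  set s : ℝ := sInf A with hsdef
  have hsA : s ∈ A := hAcpt.sInf_mem hAne
  have hs0 : 0 ≤ s := hsA.1.1
  have hst₁ : s ≤ t₁ := hsA.1.2
  have hgs : g s ≤ c := hsA.2
  have hAbdd : BddBelow A := ⟨0, fun t ht => ht.1.1⟩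
  have hbefore : ∀ t, 0 ≤ t → t < s → c < g t := by
    intro t ht0 hts
    by_contra hle
    push_neg at hle
    exact absurd (csInf_le hAbdd ⟨⟨ht0, le_trans hts.le hst₁⟩, hle⟩) (not_le.mpr hts)
  -- B : last time ≥ 0 before s
  set B : Set ℝ := Set.Icc 0 s ∩ g ⁻¹' Set.Ici 0 with hB
  have hBne : B.Nonempty := ⟨0, ⟨le_rfl, hs0⟩, hinit⟩
  have hsubs : Set.Icc (0:ℝ) s ⊆ Set.Icc 0 T :=
    Set.Icc_subset_Icc le_rfl (le_trans hst₁ ht₁.2)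
  have hBclosed : IsClosed B :=
    ContinuousOn.preimage_isClosed_of_isClosed (hgc.mono hsubs) isClosed_Icc isClosed_Ici
  have hBcpt : IsCompact B :=
    IsCompact.of_isClosed_subset isCompact_Icc hBclosed Set.inter_subset_left
  set u : ℝ := sSup B with hudef
  have huB : u ∈ B := hBcpt.sSup_mem hBne
  have hu0 : 0 ≤ u := huB.1.1
  have hus : u ≤ s := huB.1.2
  have hgu : 0 ≤ g u := huB.2
  have hBbdd : BddAbove B := ⟨s, fun t ht => ht.1.2⟩
  have hafter : ∀ t, u < t → t ≤ s → g t < 0 := by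
    intro t hut hts
    by_contra hle
    push_neg at hle
    exact absurd (le_csSup hBbdd ⟨⟨le_trans hu0 hut.le, hts⟩, hle⟩) (not_le.mpr hut)
  have huslt : u < s := by
    rcases lt_or_eq_of_le hus with hlt | heq
    · exact hlt
    · exact absurd hgu (not_le.mpr (by rw [heq]; exact lt_of_le_of_lt hgs hc0))
  -- g is monotone on [u,s]
  have hmono : MonotoneOn g (Set.Icc u s) := by
    have hsubu : Set.Icc u s ⊆ Set.Icc 0 T :=
      Set.Icc_subset_Icc hu0 (le_trans hst₁ ht₁.2)
    apply monotoneOn_of_deriv_nonneg (convex_Icc u s) (hgc.mono hsubu)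
    · intro t ht
      rw [interior_Icc] at ht
      exact ((hder t (hsubu ⟨ht.1.le, ht.2.le⟩)).differentiableAt).differentiableWithinAt
    · intro t ht
      rw [interior_Icc] at ht
      have htT : t ∈ Set.Icc 0 T := hsubu ⟨ht.1.le, ht.2.le⟩
      rw [(hder t htT).deriv]
      have h1 : g t < 0 := hafter t ht.1 ht.2.le
      have h2 : c < g t := hbefore t (le_trans hu0 ht.1.le) ht.2
      have hδt : -δ < h (x t) := lt_trans hcδ h2
      have hz := hzbf (x t) hδt
      have : α (h (x t)) < 0 := by
        have := hα.2.1 (show h (x t) < 0 from h1)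
        rwa [hα.2.2] at this
      linarith [hz]
  have : g u ≤ g s := hmono ⟨le_rfl, hus⟩ ⟨hus, le_rfl⟩ hus
  linarith
end

section
/- Under the HJI identity L_{f+g₂u₀}h + L_{g₂}h R̃⁻¹ (L_{g₂}h)ᵀ + l̃(x,u₀)/4 = 0 with l̃(x,u₀) = l(x,u₀) − 4max{L_f h, 0} − 4max{L_{g₂}h u₀, 0} and l(x,u₀) ≤ 4α(h(x)), the derivative of h along f + σg₂(u₀ + 2R̃⁻¹(L_{g₂}h)ᵀ) satisfies ḣ ≥ −2σα(h(x)) for every σ ≥ 1/2 and every x ∈ ℝⁿ. -/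
open Filter Set Matrix

/-- An extended class-K∞ function: continuous, strictly increasing, vanishing at `0`,
unbounded in both directions. -/
def ExtClassKInf (α : ℝ → ℝ) : Prop :=
  Continuous α ∧ StrictMono α ∧ α 0 = 0 ∧
    Filter.Tendsto α Filter.atTop Filter.atTop ∧
    Filter.Tendsto α Filter.atBot Filter.atBot

/-- Gain-margin improvement (pointwise inequality, eq. (75) of the paper).
With `Lfh x = L_f h(x)`, `v x = (L_{g₂}h(x))ᵀ`, `u₀` the nominal control,
`R̃(x,u₀)⁻¹ = R(x,u₀)⁻¹ + (max{L_f h,0} + max{L_{g₂}h u₀,0})/(L_{g₂}h (L_{g₂}h)ᵀ) · I`,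
`l̃ = l − 4 max{L_f h,0} − 4 max{L_{g₂}h u₀,0}` and `l ≤ 4α(h)`, the HJI identity
`L_{f+g₂u₀}h + L_{g₂}h R̃⁻¹ (L_{g₂}h)ᵀ + l̃/4 = 0` yields, for every `σ ≥ 1/2`,
`ḣ = L_f h + σ L_{g₂}h (u₀ + 2 R̃⁻¹ (L_{g₂}h)ᵀ) ≥ −2σ α(h(x))` at every point. -/
theorem hji_improved_gain_margin
    {X : Type*} (m : ℕ)
    (h l Lfh : X → ℝ)
    (v u₀ : X → (Fin m → ℝ))          -- v x = (L_{g₂}h(x))ᵀ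
    (Rinv : X → Matrix (Fin m) (Fin m) ℝ)
    (α : ℝ → ℝ) (hα : ExtClassKInf α)
    (hR_symm : ∀ x, (Rinv x).IsSymm)
    (hR_pos : ∀ x, (Rinv x).PosDef)
    (hl : ∀ x, l x ≤ 4 * α (h x))
    -- the improved weight R̃⁻¹ and penalty l̃ :
    (Rtinv : X → Matrix (Fin m) (Fin m) ℝ)
    (hRtinv : ∀ x, Rtinv x =
      Rinv x + ((max (Lfh x) 0 + max (v x ⬝ᵥ u₀ x) 0) / (v x ⬝ᵥ v x)) • (1 : Matrix (Fin m) (Fin m) ℝ))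
    (ltil : X → ℝ)
    (hltil : ∀ x, ltil x = l x - 4 * max (Lfh x) 0 - 4 * max (v x ⬝ᵥ u₀ x) 0)
    (hHJI : ∀ x, Lfh x + v x ⬝ᵥ u₀ x + v x ⬝ᵥ (Rtinv x).mulVec (v x) + ltil x / 4 = 0) :
    ∀ σ : ℝ, 1/2 ≤ σ → ∀ x : X,
      Lfh x + σ * (v x ⬝ᵥ (u₀ x + 2 • (Rtinv x).mulVec (v x)))
        ≥ -(2 * σ) * α (h x) := by
  intro σ hσ x
  have hq := hHJI x
  rw [hltil x] at hq
  have hdot : v x ⬝ᵥ (u₀ x + 2 • (Rtinv x).mulVec (v x))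
      = v x ⬝ᵥ u₀ x + 2 * (v x ⬝ᵥ (Rtinv x).mulVec (v x)) := by
    rw [dotProduct_add, two_smul, dotProduct_add]; ring
  rw [hdot]
  have hl' := hl x
  rcases max_cases (Lfh x) (0:ℝ) with ⟨hA, hA'⟩ | ⟨hA, hA'⟩ <;>
    rcases max_cases (v x ⬝ᵥ u₀ x) (0:ℝ) with ⟨hB, hB'⟩ | ⟨hB, hB'⟩ <;>
    rw [hA, hB] at hq <;>
    nlinarith [hq, hl', hσ, hA', hB']
end
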